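/- Let A be an associative ℚ(v)-algebra containing elements x, y, z satisfying x y = v y x + v z, x z = v^{−1} z x, and y z = v z y. Then for all m, n ≥ 0, x^{(m)} y^{(n)} = ∑_{j=0}^{min(m,n)} v^{j + (m−j)(n−j)} y^{(n−j)} z^{(j)} x^{(m−j)}. -/

import Mathlib

/-- `v^n` in `ℚ(v)` for `n : ℤ`. -/
noncomputable def qv (n : ℤ) : RatFunc ℚ := (RatFunc.X : RatFunc ℚ) ^ n

/-- The balanced quantum integer `[m]_v = (v^m − v^{−m})/(v − v^{−1})` in `ℚ(v)`. -/
noncomputable def qint (m : ℕ) : RatFunc ℚ := (qv m - qv (-(m : ℤ))) / (qv 1 - qv (-1))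

/-- The balanced quantum factorial `[m]!_v` in `ℚ(v)`. -/
noncomputable def qfact (m : ℕ) : RatFunc ℚ := ∏ k ∈ Finset.range m, qint (k + 1)

/-- The divided power `x^{(m)} = x^m/[m]!_v` in a `ℚ(v)`-algebra. -/
noncomputable def dp {A : Type*} [Ring A] [Algebra (RatFunc ℚ) A] (x : A) (m : ℕ) : A :=
  (qfact m)⁻¹ • x ^ m

/-- Levendorskii–Soibelman-type straightening rule for divided powers: if `x y = v y x + v z`,
`x z = v^{−1} z x`, `y z = v z y` in a `ℚ(v)`-algebra, then for all `m, n ≥ 0`,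
`x^{(m)} y^{(n)} = ∑_{j=0}^{min(m,n)} v^{j+(m−j)(n−j)} y^{(n−j)} z^{(j)} x^{(m−j)}`. -/


lemma X_ne : (RatFunc.X : RatFunc ℚ) ≠ 0 := RatFunc.X_ne_zero
lemma qv_ne_zero (n : ℤ) : qv n ≠ 0 := zpow_ne_zero n X_ne
lemma qv_mul (a b : ℤ) : qv a * qv b = qv (a + b) := (zpow_add₀ X_ne a b).symm
lemma qv_zero : qv 0 = 1 := zpow_zero _

lemma qnum_ne (m : ℕ) (h : m ≠ 0) : qv (m : ℤ) - qv (-(m : ℤ)) ≠ 0 := by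
  rw [sub_ne_zero]
  intro heq
  have h2 : (RatFunc.X : RatFunc ℚ) ^ (2*m) = 1 := by
    have h1 := congrArg (· * qv (m:ℤ)) heq
    simp only [qv_mul] at h1
    have e1 : -(m:ℤ) + m = 0 := by ring
    have e2 : (m:ℤ) + m = ((2*m:ℕ):ℤ) := by push_cast; ring
    rw [e1, e2, qv_zero] at h1
    rw [← zpow_natCast (RatFunc.X : RatFunc ℚ) (2*m)]
    exact h1
  have h5 : (Polynomial.X : Polynomial ℚ) ^ (2*m) = 1 := by
    apply RatFunc.algebraMap_injective ℚ
    simpa [map_pow, RatFunc.algebraMap_X] using h2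
  have h6 := congrArg Polynomial.natDegree h5
  simp [Polynomial.natDegree_X_pow] at h6
  omega

lemma qden_ne : qv 1 - qv (-1) ≠ 0 := by
  have := qnum_ne 1 one_ne_zero
  simpa using this

lemma qint_ne_zero (m : ℕ) (h : m ≠ 0) : qint m ≠ 0 :=
  div_ne_zero (qnum_ne m h) qden_ne

lemma qint_zero : qint 0 = 0 := by simp [qint]

lemma qint_one : qint 1 = 1 := by
  simp only [qint, Nat.cast_one]
  exact div_self qden_ne

lemma qfact_succ (m : ℕ) : qfact (m+1) = qfact m * qint (m+1) := Finset.prod_range_succ _ _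

lemma qfact_ne_zero (m : ℕ) : qfact m ≠ 0 := by
  induction m with
  | zero => simp [qfact]
  | succ k ih => rw [qfact_succ]; exact mul_ne_zero ih (qint_ne_zero _ (Nat.succ_ne_zero k))

lemma qint_split (a b : ℕ) : qint (a+b) = qv (-(b:ℤ)) * qint a + qv (a:ℤ) * qint b := by
  simp only [qint]
  rw [mul_div_assoc', mul_div_assoc', ← add_div]
  congr 1
  simp only [mul_sub, qv_mul]
  push_cast
  have e1 : -(b:ℤ) + a = a - b := by ring
  have e2 : -(b:ℤ) + -a = -(a+b) := by ring
  have e3 : (a:ℤ) + b = a + b := rfl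
  have e4 : (a:ℤ) + -b = a - b := by ring
  rw [e1, e2, e4]
  ring


section
variable {A : Type*} [Ring A] [Algebra (RatFunc ℚ) A]

lemma dp_zero (a : A) : dp a 0 = 1 := by simp [dp, qfact]

lemma mul_dp_self (a : A) (m : ℕ) : a * dp a m = qint (m+1) • dp a (m+1) := by
  simp only [dp, qfact_succ]
  rw [mul_smul_comm, smul_smul]
  congr 1
  · have h1 := qfact_ne_zero m
    have h2 := qint_ne_zero (m+1) (by omega)
    field_simp
  · exact (pow_succ' a m).symm

variable (x y z : A)
    (hxy : x * y = qv 1 • (y * x) + qv 1 • z)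
    (hxz : x * z = qv (-1) • (z * x))
    (hyz : y * z = qv 1 • (z * y))

include hxz in
lemma rawZ (j : ℕ) : x * z ^ j = qv (-(j:ℤ)) • (z ^ j * x) := by
  induction j with
  | zero => simp [qv_zero]
  | succ k ih =>
    rw [pow_succ' z k, ← mul_assoc, hxz, smul_mul_assoc, mul_assoc, ih, mul_smul_comm,
      smul_smul, qv_mul, ← mul_assoc, ← pow_succ' z k]
    congr 2
    push_cast; ring

include hyz in
lemma zy : z * y = qv (-1) • (y * z) := by
  rw [hyz, smul_smul, qv_mul]
  norm_num [qv_zero]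

include hyz in
lemma rawZY (k : ℕ) : z * y ^ k = qv (-(k:ℤ)) • (y ^ k * z) := by
  induction k with
  | zero => simp [qv_zero]
  | succ k ih =>
    rw [pow_succ' y k, ← mul_assoc, zy y z hyz, smul_mul_assoc, mul_assoc, ih, mul_smul_comm,
      smul_smul, qv_mul, ← mul_assoc, ← pow_succ' y k]
    congr 2
    push_cast; ring

include hxy hyz in
lemma rawY (k : ℕ) : x * y ^ k = qv (k:ℤ) • (y ^ k * x) + (qv 1 * qint k) • (y ^ (k-1) * z) := by
  induction k with
  | zero => simp [qv_zero, qint_zero]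
  | succ k ih =>
    have h1 : x * y^(k+1) = qv 1 • (y * (x * y^k)) + qv 1 • (z * y^k) := by
      rw [pow_succ', ← mul_assoc, hxy, add_mul, smul_mul_assoc, smul_mul_assoc, mul_assoc]
    rw [h1, ih, rawZY y z hyz k]
    simp only [mul_add, mul_smul_comm, smul_add, smul_smul, Nat.add_sub_cancel]
    rw [← mul_assoc y (y^k) x, ← pow_succ']
    have hc : qv 1 * qint (k+1) = qv 1 * (qv 1 * qint k) + qv 1 * qv (-(k:ℤ)) := by
      rw [show k+1 = 1+k from by omega, qint_split 1 k, qint_one]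
      ring
    have e : qv ((k+1:ℕ):ℤ) = qv 1 * qv (k:ℤ) := by
      rw [qv_mul]; congr 1; push_cast; ring
    cases k with
    | zero =>
      simp only [qint_zero, mul_zero, zero_smul, add_zero, pow_zero, one_mul]
      rw [hc, e]
      simp [qv_zero, qint_zero]
    | succ k' =>
      have hy : y * (y ^ (k'+1-1) * z) = y ^ (k'+1) * z := by
        rw [Nat.add_sub_cancel, ← mul_assoc, ← pow_succ']
      rw [hy, hc, e, add_smul]
      abel

include hxz in
lemma dpZ (j : ℕ) : x * dp z j = qv (-(j:ℤ)) • (dp z j * x) := by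
  simp only [dp, mul_smul_comm, smul_mul_assoc, rawZ x z hxz j, smul_smul]
  congr 1
  ring

include hxy hyz in
lemma dpY (k : ℕ) : x * dp y k = qv (k:ℤ) • (dp y k * x)
    + qv 1 • (if k = 0 then 0 else dp y (k-1) * z) := by
  cases k with
  | zero => simp [dp_zero, qv_zero]
  | succ k =>
    rw [if_neg (Nat.succ_ne_zero k), Nat.add_sub_cancel]
    simp only [dp, mul_smul_comm, rawY x y z hxy hyz (k+1), Nat.add_sub_cancel]
    simp only [smul_add, smul_smul, smul_mul_assoc]
    congr 1
    · congr 1; ring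
    · congr 1
      rw [qfact_succ]
      have h1 := qfact_ne_zero k
      have h2 := qint_ne_zero (k+1) (by omega)
      field_simp

include hxy hxz hyz in
lemma PT (m n j : ℕ) (hj : j ≤ m) :
    x * (dp y (n-j) * dp z j * dp x (m-j)) =
      (qv ((n-j : ℕ):ℤ) * qv (-(j:ℤ)) * qint (m-j+1)) • (dp y (n-j) * dp z j * dp x (m+1-j))
      + (if j+1 ≤ n then qv 1 * qint (j+1) else 0) •
          (dp y (n-(j+1)) * dp z (j+1) * dp x (m+1-(j+1))) := by
  have hxc : x * (dp z j * dp x (m-j)) =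
      (qv (-(j:ℤ)) * qint (m-j+1)) • (dp z j * dp x (m+1-j)) := by
    rw [← mul_assoc, dpZ x z hxz j, smul_mul_assoc, mul_assoc, mul_dp_self x (m-j),
      show m-j+1 = m+1-j from by omega, mul_smul_comm, smul_smul]
  rw [mul_assoc (dp y (n-j)), ← mul_assoc x (dp y (n-j)), dpY x y z hxy hyz (n-j),
    add_mul, smul_mul_assoc, smul_mul_assoc]
  congr 1
  · rw [mul_assoc (dp y (n-j)) x, hxc, mul_smul_comm, smul_smul, ← mul_assoc (dp y (n-j)),
      mul_assoc (qv ((n-j:ℕ):ℤ))]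
  · by_cases hn : j + 1 ≤ n
    · rw [if_pos hn, if_neg (show ¬ (n - j = 0) by omega)]
      rw [mul_assoc (dp y (n-j-1)) z, ← mul_assoc z (dp z j), mul_dp_self z j,
        smul_mul_assoc, mul_smul_comm, smul_smul,
        show n - j - 1 = n - (j+1) from by omega, show m + 1 - (j+1) = m - j from by omega,
        mul_assoc (dp y (n-(j+1)))]
    · rw [if_neg hn, if_pos (show n - j = 0 by omega)]
      simp

end

noncomputable def Cc (m n j : ℕ) : RatFunc ℚ :=
  if j ≤ n then qv ((j:ℤ) + ((m-j)*(n-j) : ℕ)) else 0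

lemma COEFF (m n j : ℕ) (hj : j ≤ m+1) :
    (if j ≤ m then Cc m n j * (qv ((n-j : ℕ):ℤ) * qv (-(j:ℤ)) * qint (m-j+1)) else 0)
    + (if 1 ≤ j then Cc m n (j-1) * (if (j-1)+1 ≤ n then qv 1 * qint ((j-1)+1) else 0) else 0)
    = qint (m+1) * Cc (m+1) n j := by
  by_cases hn : j ≤ n
  · rcases Nat.eq_zero_or_pos j with rfl | hj1
    · simp only [Cc, Nat.zero_le, if_pos, Nat.sub_zero, if_neg (show ¬ ((1:ℕ) ≤ 0) by omega),
        add_zero, Nat.cast_zero, neg_zero]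
      have h : qv ((0:ℤ) + ((m*n:ℕ):ℤ)) * (qv ((n:ℕ):ℤ) * qv 0) = qv ((0:ℤ) + (((m+1)*n:ℕ):ℤ)) := by
        rw [qv_mul, qv_mul]
        congr 1
        push_cast
        ring
      calc qv ((0:ℤ) + ((m*n:ℕ):ℤ)) * (qv ((n:ℕ):ℤ) * qv 0 * qint (m+1))
          = qv ((0:ℤ) + ((m*n:ℕ):ℤ)) * (qv ((n:ℕ):ℤ) * qv 0) * qint (m+1) := by ring
        _ = qv ((0:ℤ) + (((m+1)*n:ℕ):ℤ)) * qint (m+1) := by rw [h]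
        _ = qint (m+1) * qv ((0:ℤ) + (((m+1)*n:ℕ):ℤ)) := by ring
    · rcases Nat.lt_or_ge j (m+1) with hjm | hjm
      · have hjm' : j ≤ m := by omega
        rw [if_pos hjm', if_pos (show (1:ℕ) ≤ j by omega), show (j-1)+1 = j from by omega, if_pos hn]
        simp only [Cc, if_pos hn, if_pos (show j - 1 ≤ n by omega)]
        rw [show m+1 = (m-j+1) + j from by omega, qint_split (m-j+1) j]
        have key1 : qv ((j:ℤ) + ((m-j)*(n-j) : ℕ)) * qv ((n-j : ℕ):ℤ)
            = qv ((j:ℤ) + (((m-j+1+j)-j)*(n-j) : ℕ)) := by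
          rw [qv_mul]
          congr 1
          rw [show m-j+1+j-j = (m-j)+1 from by omega]
          push_cast
          ring
        have key2 : qv (((j-1:ℕ):ℤ) + ((m-(j-1))*(n-(j-1)) : ℕ)) * qv 1
            = qv ((j:ℤ) + (((m-j+1+j)-j)*(n-j) : ℕ)) * qv ((m-j+1 : ℕ):ℤ) := by
          rw [qv_mul, qv_mul]
          congr 1
          rw [show m-(j-1) = (m-j)+1 from by omega, show n-(j-1) = (n-j)+1 from by omega,
            show m-j+1+j-j = (m-j)+1 from by omega, show ((j-1:ℕ):ℤ) = (j:ℤ) - 1 from by omega]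
          push_cast
          ring
        calc qv ((j:ℤ) + ((m-j)*(n-j) : ℕ)) * (qv ((n-j : ℕ):ℤ) * qv (-(j:ℤ)) * qint (m-j+1))
            + qv (((j-1:ℕ):ℤ) + ((m-(j-1))*(n-(j-1)) : ℕ)) * (qv 1 * qint j)
            = (qv ((j:ℤ) + ((m-j)*(n-j) : ℕ)) * qv ((n-j : ℕ):ℤ)) * (qv (-(j:ℤ)) * qint (m-j+1))
              + (qv (((j-1:ℕ):ℤ) + ((m-(j-1))*(n-(j-1)) : ℕ)) * qv 1) * qint j := by
              ring
          _ = qv ((j:ℤ) + (((m-j+1+j)-j)*(n-j) : ℕ)) * (qv (-(j:ℤ)) * qint (m-j+1))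
              + (qv ((j:ℤ) + (((m-j+1+j)-j)*(n-j) : ℕ)) * qv ((m-j+1 : ℕ):ℤ)) * qint j := by
              rw [key1, key2]
          _ = (qv (-(j:ℤ)) * qint (m-j+1) + qv ((m-j+1:ℕ):ℤ) * qint j)
              * qv ((j:ℤ) + (((m-j+1+j)-j)*(n-j) : ℕ)) := by ring
      · have hje : j = m+1 := by omega
        subst hje
        have hmn : m ≤ n := by omega
        have hmn1 : m+1 ≤ n := hn
        rw [if_neg (by omega : ¬ m+1 ≤ m), if_pos (by omega : (1:ℕ) ≤ m+1), zero_add,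
          show m+1-1 = m from by omega]
        simp only [Cc, if_pos hmn, if_pos hmn1]
        have h : qv (((m:ℕ):ℤ) + (((m-m)*(n-m) : ℕ):ℤ)) * qv 1
            = qv (((m+1:ℕ):ℤ) + (((m+1-(m+1))*(n-(m+1)) : ℕ):ℤ)) := by
          rw [qv_mul]
          congr 1
          rw [Nat.sub_self, Nat.sub_self]
          push_cast
          ring
        calc qv (((m:ℕ):ℤ) + (((m-m)*(n-m) : ℕ):ℤ)) * (qv 1 * qint (m+1))
            = qv (((m:ℕ):ℤ) + (((m-m)*(n-m) : ℕ):ℤ)) * qv 1 * qint (m+1) := by ring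
          _ = qv (((m+1:ℕ):ℤ) + (((m+1-(m+1))*(n-(m+1)) : ℕ):ℤ)) * qint (m+1) := by rw [h]
          _ = qint (m+1) * qv (((m+1:ℕ):ℤ) + (((m+1-(m+1))*(n-(m+1)) : ℕ):ℤ)) := by ring
  · have hj1 : 1 ≤ j := by omega
    rw [if_pos hj1]
    simp only [Cc, if_neg hn, zero_mul, mul_zero, ite_self, zero_add,
      if_neg (show ¬ ((j-1)+1 ≤ n) by omega), mul_zero]

section
variable {A : Type*} [Ring A] [Algebra (RatFunc ℚ) A]
variable (x y z : A)
    (hxy : x * y = qv 1 • (y * x) + qv 1 • z)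
    (hxz : x * z = qv (-1) • (z * x))
    (hyz : y * z = qv 1 • (z * y))

include hxy hxz hyz in
lemma auxmain (m n : ℕ) : dp x m * dp y n =
    ∑ j ∈ Finset.range (m+1), Cc m n j • (dp y (n-j) * dp z j * dp x (m-j)) := by
  induction m generalizing n with
  | zero =>
    rw [Finset.sum_range_one]
    simp [Cc, dp_zero, qv_zero]
  | succ m ih =>
    have hq : qint (m+1) ≠ 0 := qint_ne_zero _ (by omega)
    have KEY : qint (m+1) • (dp x (m+1) * dp y n)
        = qint (m+1) • ∑ j ∈ Finset.range (m+1+1),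
            Cc (m+1) n j • (dp y (n-j) * dp z j * dp x (m+1-j)) := by
      rw [← smul_mul_assoc, ← mul_dp_self x m, mul_assoc, ih, Finset.mul_sum]
      have step1 : ∀ j ∈ Finset.range (m+1),
          x * (Cc m n j • (dp y (n-j) * dp z j * dp x (m-j)))
          = (Cc m n j * (qv ((n-j:ℕ):ℤ) * qv (-(j:ℤ)) * qint (m-j+1))) •
              (dp y (n-j) * dp z j * dp x (m+1-j))
            + (Cc m n j * (if j+1 ≤ n then qv 1 * qint (j+1) else 0)) •
              (dp y (n-(j+1)) * dp z (j+1) * dp x (m+1-(j+1))) := by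
        intro j hj
        have hjm : j ≤ m := by have := Finset.mem_range.mp hj; omega
        rw [mul_smul_comm, PT x y z hxy hxz hyz m n j hjm, smul_add, smul_smul, smul_smul]
      rw [Finset.sum_congr rfl step1, Finset.sum_add_distrib]
      have h2 : ∑ j ∈ Finset.range (m+1),
          (Cc m n j * (qv ((n-j:ℕ):ℤ) * qv (-(j:ℤ)) * qint (m-j+1))) •
            (dp y (n-j) * dp z j * dp x (m+1-j))
          = ∑ j ∈ Finset.range (m+1+1),
            (if j ≤ m then Cc m n j * (qv ((n-j:ℕ):ℤ) * qv (-(j:ℤ)) * qint (m-j+1)) else 0) •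
              (dp y (n-j) * dp z j * dp x (m+1-j)) := by
        conv_rhs => rw [Finset.sum_range_succ]
        rw [if_neg (show ¬ m+1 ≤ m by omega), zero_smul, add_zero]
        refine Finset.sum_congr rfl fun j hj => ?_
        have hjm : j ≤ m := by have := Finset.mem_range.mp hj; omega
        rw [if_pos hjm]
      have h3 : ∑ j ∈ Finset.range (m+1),
          (Cc m n j * (if j+1 ≤ n then qv 1 * qint (j+1) else 0)) •
            (dp y (n-(j+1)) * dp z (j+1) * dp x (m+1-(j+1)))
          = ∑ j ∈ Finset.range (m+1+1),
            (if 1 ≤ j then Cc m n (j-1) * (if (j-1)+1 ≤ n then qv 1 * qint ((j-1)+1) else 0)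
              else 0) • (dp y (n-j) * dp z j * dp x (m+1-j)) := by
        conv_rhs => rw [Finset.sum_range_succ']
        rw [if_neg (show ¬ (1:ℕ) ≤ 0 by omega), zero_smul, add_zero]
        refine Finset.sum_congr rfl fun j hj => ?_
        rw [if_pos (show (1:ℕ) ≤ j+1 by omega), Nat.add_sub_cancel]
      rw [h2, h3, ← Finset.sum_add_distrib, Finset.smul_sum]
      refine Finset.sum_congr rfl fun j hj => ?_
      have hjm : j ≤ m+1 := by have := Finset.mem_range.mp hj; omega
      rw [smul_smul, ← COEFF m n j hjm, add_smul]
    calc dp x (m+1) * dp y n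
        = (qint (m+1))⁻¹ • (qint (m+1) • (dp x (m+1) * dp y n)) := (inv_smul_smul₀ hq _).symm
      _ = _ := by rw [KEY, inv_smul_smul₀ hq]

include hxy hxz hyz in
theorem stmt7' : ∀ m n : ℕ, dp x m * dp y n =
      ∑ j ∈ Finset.range (Nat.min m n + 1),
        qv ((j : ℤ) + ((m - j) * (n - j) : ℕ)) • (dp y (n - j) * dp z j * dp x (m - j)) := by
  intro m n
  rw [auxmain x y z hxy hxz hyz m n]
  have e2 : ∑ j ∈ Finset.range (Nat.min m n + 1), Cc m n j • (dp y (n-j) * dp z j * dp x (m-j))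
      = ∑ j ∈ Finset.range (m+1), Cc m n j • (dp y (n-j) * dp z j * dp x (m-j)) := by
    have hm1 : Nat.min m n ≤ m := Nat.min_le_left m n
    apply Finset.sum_subset
    · intro j hj
      simp only [Finset.mem_range] at *
      omega
    · intro j hjt hjs
      simp only [Finset.mem_range] at hjt hjs
      have h2 : ¬ j ≤ n := by
        intro hjn
        exact hjs (by have : j ≤ Nat.min m n := Nat.le_min.mpr ⟨by omega, hjn⟩; omega)
      simp only [Cc, if_neg h2, zero_smul]
  rw [← e2]
  refine Finset.sum_congr rfl fun j hj => ?_
  have hjn : j ≤ n := by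
    have h1 := Finset.mem_range.mp hj
    have h2 : Nat.min m n ≤ n := Nat.min_le_right m n
    omega
  simp only [Cc, if_pos hjn]

end

theorem stmt7 {A : Type*} [Ring A] [Algebra (RatFunc ℚ) A] (x y z : A)
    (hxy : x * y = qv 1 • (y * x) + qv 1 • z)
    (hxz : x * z = qv (-1) • (z * x))
    (hyz : y * z = qv 1 • (z * y)) :
    ∀ m n : ℕ, dp x m * dp y n =
      ∑ j ∈ Finset.range (Nat.min m n + 1),
        qv ((j : ℤ) + ((m - j) * (n - j) : ℕ)) • (dp y (n - j) * dp z j * dp x (m - j)) :=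
  stmt7' x y z hxy hxz hyz
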